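/- Let $W$ be a $(t-1)$-dimensional subspace of $\mathbb{F}_q^k$ and let $R$ be a fixed $(t+1)$-dimensional subspace containing $W$, with $m + t + 2 \le k$. The number of unordered $(m+1)$-element sets $\{T_1, \dots, T_{m+1}\}$ of $t$-dimensional subspaces containing $W$ (each of the form $W \oplus T_i$ for some 1-dimensional $T_i$) such that $R \oplus T_1 \oplus \cdots \oplus T_{m+1}$ is an $(m+t+2)$-dimensional subspace equals $\frac{1}{(m+1)!}\, q^{\frac{(m+1)(m+4)}{2}} \prod_{i=1}^{m+1} \binom{k-t-i}{1}_q$. -/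

import Mathlib

/-- The Gaussian (q-)binomial coefficient as an exact quotient of products. -/
def gbinom (q a b : ℕ) : ℕ :=
  (∏ i ∈ Finset.range b, (q ^ (a - i) - 1)) / (∏ i ∈ Finset.range b, (q ^ (b - i) - 1))


open Module Submodule

variable {F : Type} [Field F] [Fintype F] {k : ℕ}

lemma exists_span_line (W V : Submodule F (Fin k → F)) (hWV : W ≤ V)
    (hd : finrank F V = finrank F W + 1) :
    ∃ v, v ∈ V ∧ v ∉ W ∧ W ⊔ Submodule.span F {v} = V := by
  have hlt : W < V := Submodule.lt_of_le_of_finrank_lt_finrank hWV (by omega)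
  obtain ⟨v, hvV, hvW⟩ := SetLike.exists_of_lt hlt
  have h1 : W ⊔ Submodule.span F {v} ≤ V := sup_le hWV (Submodule.span_le.mpr (by simpa using hvV))
  have h2 : W < W ⊔ Submodule.span F {v} := by
    refine lt_of_le_of_ne le_sup_left (fun h => hvW ?_)
    have : v ∈ W ⊔ Submodule.span F {v} := Submodule.mem_sup_right (Submodule.mem_span_singleton_self v)
    rwa [← h] at this
  have h3 : finrank F W < finrank F ↥(W ⊔ Submodule.span F {v}) :=
    Submodule.finrank_lt_finrank_of_lt h2
  refine ⟨v, hvV, hvW, Submodule.eq_of_le_of_finrank_le h1 (by omega)⟩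

lemma sup_line_le (W X V : Submodule F (Fin k → F)) (hWX : W ≤ X) (hWV : W ≤ V)
    (hd : finrank F V = finrank F W + 1) :
    finrank F ↥(X ⊔ V) ≤ finrank F X + 1 := by
  obtain ⟨v, hvV, hvW, hspan⟩ := exists_span_line W V hWV hd
  have h0 : v ≠ 0 := fun h => hvW (h ▸ W.zero_mem)
  have : X ⊔ V = X ⊔ Submodule.span F {v} := by
    rw [← hspan, ← sup_assoc, sup_eq_left.mpr hWX]
  rw [this]
  calc finrank F ↥(X ⊔ Submodule.span F {v})
      ≤ finrank F X + finrank F ↥(Submodule.span F {v}) :=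
        Submodule.finrank_add_le_finrank_add_finrank _ _
    _ ≤ finrank F X + 1 := by rw [finrank_span_singleton h0]

set_option linter.unusedSectionVars false

lemma finset_sup_le (W X : Submodule F (Fin k → F)) (hWX : W ≤ X)
    (s : Finset (Submodule F (Fin k → F)))
    (hs : ∀ V ∈ s, W ≤ V ∧ finrank F V = finrank F W + 1) :
    finrank F ↥(X ⊔ s.sup id) ≤ finrank F X + s.card := by
  classical
  induction s using Finset.induction with
  | empty => rw [Finset.sup_empty, sup_bot_eq]; simp
  | @insert V s' hV ih =>
    rw [Finset.sup_insert, id]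
    have h1 : X ⊔ (V ⊔ s'.sup id) = (X ⊔ s'.sup id) ⊔ V := by
      rw [sup_comm V, ← sup_assoc]
    rw [h1]
    have h2 := sup_line_le W (X ⊔ s'.sup id) V (hWX.trans le_sup_left)
      (hs V (Finset.mem_insert_self _ _)).1 (hs V (Finset.mem_insert_self _ _)).2
    have h3 := ih (fun V hV => hs V (Finset.mem_insert_of_mem hV))
    rw [Finset.card_insert_of_notMem hV]
    omega

lemma dichotomy (W S V : Submodule F (Fin k → F)) (hWS : W ≤ S) (hWV : W ≤ V)
    (hd : finrank F V = finrank F W + 1) (hVS : ¬ V ≤ S) :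
    finrank F ↥(S ⊔ V) = finrank F S + 1 ∧ V ⊓ S = W := by
  have hinf : V ⊓ S = W := by
    have h1 : W ≤ V ⊓ S := le_inf hWV hWS
    have h2 : V ⊓ S < V := lt_of_le_of_ne inf_le_left (fun h => hVS (by rw [← h]; exact inf_le_right))
    have h3 : finrank F ↥(V ⊓ S) < finrank F V := Submodule.finrank_lt_finrank_of_lt h2
    exact (Submodule.eq_of_le_of_finrank_le h1 (by
      have := Submodule.finrank_mono h1
      omega)).symm
  have := Submodule.finrank_sup_add_finrank_inf_eq S V
  rw [inf_comm, hinf] at this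
  exact ⟨by omega, hinf⟩

lemma count_ext (t : ℕ) (ht : 1 ≤ t) (W S : Submodule F (Fin k → F))
    (hW : finrank F W = t - 1) (hWS : W ≤ S) :
    Nat.card {V : Submodule F (Fin k → F) //
        finrank F V = t ∧ W ≤ V ∧ ¬ V ≤ S} *
      (Fintype.card F ^ t - Fintype.card F ^ (t - 1)) =
    Fintype.card F ^ k - Fintype.card F ^ (finrank F S) := by
  classical
  haveI : Finite (Submodule F (Fin k → F)) :=
    Finite.of_injective (fun A => (A : Set (Fin k → F))) SetLike.coe_injective
  haveI := Fintype.ofFinite (Submodule F (Fin k → F))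
  have hfr : ∀ v : Fin k → F, v ∉ W → finrank F ↥(W ⊔ Submodule.span F {v}) = t := by
    intro v hv
    have h0 : v ≠ 0 := fun h => hv (h ▸ W.zero_mem)
    have h2 : W < W ⊔ Submodule.span F {v} := by
      refine lt_of_le_of_ne le_sup_left (fun h => hv ?_)
      have : v ∈ W ⊔ Submodule.span F {v} :=
        Submodule.mem_sup_right (Submodule.mem_span_singleton_self v)
      rwa [← h] at this
    have h3 := Submodule.finrank_lt_finrank_of_lt h2
    have h4 : finrank F ↥(W ⊔ Submodule.span F {v}) ≤
        finrank F W + finrank F ↥(Submodule.span F {v}) :=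
      Submodule.finrank_add_le_finrank_add_finrank _ _
    rw [finrank_span_singleton h0] at h4
    omega
  let f : {v : Fin k → F // v ∉ S} →
      {V : Submodule F (Fin k → F) // finrank F V = t ∧ W ≤ V ∧ ¬ V ≤ S} := fun v =>
    ⟨W ⊔ Submodule.span F {v.1}, by
      have hvW : v.1 ∉ W := fun h => v.2 (hWS h)
      exact ⟨hfr v.1 hvW, le_sup_left,
        fun hle => v.2 (hle (Submodule.mem_sup_right (Submodule.mem_span_singleton_self v.1)))⟩⟩
  have hfiber : ∀ Vp : {V : Submodule F (Fin k → F) // finrank F V = t ∧ W ≤ V ∧ ¬ V ≤ S},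
      Nat.card {v // f v = Vp} = Fintype.card F ^ t - Fintype.card F ^ (t - 1) := by
    rintro ⟨V, hVt, hWV, hVS⟩
    have hinf : V ⊓ S = W := (dichotomy W S V hWS hWV (by omega) hVS).2
    have hsub : ∀ x : Fin k → F, x ∈ V → x ∉ S → W ⊔ Submodule.span F {x} = V := by
      intro x hxV hxS
      have hxW : x ∉ W := fun h => hxS (hWS h)
      refine Submodule.eq_of_le_of_finrank_le
        (sup_le hWV (Submodule.span_le.mpr (by simpa using hxV))) ?_
      rw [hfr x hxW, hVt]
    have e1 : Nat.card {x : Fin k → F // x ∈ V ∧ x ∉ S} =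
        Nat.card {v // f v = (⟨V, hVt, hWV, hVS⟩ : {V : Submodule F (Fin k → F) //
          finrank F V = t ∧ W ≤ V ∧ ¬ V ≤ S})} := by
      apply Nat.card_eq_of_bijective
        (fun x => ⟨⟨x.1, x.2.2⟩, Subtype.ext (hsub x.1 x.2.1 x.2.2)⟩)
      constructor
      · intro a b h
        exact Subtype.ext (congrArg (fun z => z.1.1) h)
      · rintro ⟨⟨v, hv⟩, hfv⟩
        have hV : W ⊔ Submodule.span F {v} = V := Subtype.ext_iff.mp hfv
        have hvV : v ∈ V := by
          rw [← hV]; exact Submodule.mem_sup_right (Submodule.mem_span_singleton_self v)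
        exact ⟨⟨v, hvV, hv⟩, rfl⟩
    rw [← e1]
    have hiff : ∀ x : Fin k → F, (x ∈ V ∧ x ∉ S) ↔ (x ∈ V ∧ x ∉ W) := by
      intro x
      constructor
      · rintro ⟨h1, h2⟩; exact ⟨h1, fun h => h2 (hWS h)⟩
      · rintro ⟨h1, h2⟩
        refine ⟨h1, fun h => h2 ?_⟩
        rw [← hinf]; exact ⟨h1, h⟩
    rw [Nat.card_congr (Equiv.subtypeEquivRight hiff)]
    rw [Nat.card_congr (Equiv.subtypeSubtypeEquivSubtypeInter (· ∈ V) (· ∉ W)).symm]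
    have hcv : Nat.card {y : ↥V // ↑y ∈ W} = Fintype.card F ^ (t - 1) := by
      have e2 : Nat.card {y : ↥V // ↑y ∈ W} = Nat.card ↥(W.comap V.subtype) :=
        Nat.card_congr (Equiv.subtypeEquivRight (by intro y; simp))
      rw [e2, Nat.card_congr (Submodule.comapSubtypeEquivOfLe hWV).toEquiv,
        Nat.card_eq_fintype_card, card_eq_pow_finrank (K := F), hW]
    have hcV : Nat.card ↥V = Fintype.card F ^ t := by
      rw [Nat.card_eq_fintype_card, card_eq_pow_finrank (K := F), hVt]
    rw [Nat.card_eq_fintype_card, Fintype.card_subtype_compl,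
      ← Nat.card_eq_fintype_card, ← Nat.card_eq_fintype_card, hcv, hcV]
  have htot : Nat.card {v : Fin k → F // v ∉ S} =
      Nat.card {V : Submodule F (Fin k → F) // finrank F V = t ∧ W ≤ V ∧ ¬ V ≤ S} *
        (Fintype.card F ^ t - Fintype.card F ^ (t - 1)) := by
    rw [Nat.card_eq_fintype_card, Fintype.card_congr (Equiv.sigmaFiberEquiv f).symm,
      Fintype.card_sigma]
    rw [Finset.sum_congr rfl (fun Vp _ => by
      rw [← Nat.card_eq_fintype_card, hfiber Vp])]
    rw [Finset.sum_const, smul_eq_mul, Finset.card_univ, ← Nat.card_eq_fintype_card]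
  rw [← htot, Nat.card_eq_fintype_card, Fintype.card_subtype_compl,
    ← Nat.card_eq_fintype_card, ← Nat.card_eq_fintype_card]
  have h1 : Nat.card (Fin k → F) = Fintype.card F ^ k := by
    rw [Nat.card_eq_fintype_card, card_eq_pow_finrank (K := F), Module.finrank_fin_fun]
  have h2 : Nat.card {v : Fin k → F // v ∈ S} = Fintype.card F ^ (finrank F S) := by
    rw [Nat.card_eq_fintype_card, card_eq_pow_finrank (K := F)]
  rw [h1, h2]

lemma iSup_fin_succ' {α : Type*} [CompleteLattice α] {n : ℕ} (g : Fin (n + 1) → α) :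
    (⨆ i, g i) = (⨆ i : Fin n, g i.castSucc) ⊔ g (Fin.last n) := by
  refine le_antisymm (iSup_le fun i => ?_)
    (sup_le (iSup_le fun i => le_iSup g _) (le_iSup g _))
  induction i using Fin.lastCases with
  | last => exact le_sup_right
  | cast i => exact le_sup_of_le_left (le_iSup (fun j : Fin n => g j.castSucc) i)

lemma tuple_sup_le (W X : Submodule F (Fin k → F)) (hWX : W ≤ X) :
    ∀ (n : ℕ) (g : Fin n → Submodule F (Fin k → F)),
      (∀ i, W ≤ g i ∧ finrank F (g i) = finrank F W + 1) →
      finrank F ↥(X ⊔ ⨆ i, g i) ≤ finrank F X + n := by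
  intro n
  induction n with
  | zero =>
    intro g _
    rw [show (⨆ i, g i) = ⊥ from iSup_of_empty g, sup_bot_eq]
    simp
  | succ n ih =>
    intro g hg
    rw [iSup_fin_succ' g, ← sup_assoc]
    have h1 := sup_line_le W (X ⊔ ⨆ i : Fin n, g i.castSucc) (g (Fin.last n))
      (hWX.trans le_sup_left) (hg (Fin.last n)).1 (hg (Fin.last n)).2
    have h2 : finrank F ↥(X ⊔ ⨆ i : Fin n, g i.castSucc) ≤ finrank F ↥X + n :=
      ih (fun i => g i.castSucc) (fun i => hg i.castSucc)
    omega

lemma ordered_count (t : ℕ) (ht : 1 ≤ t) (W R : Submodule F (Fin k → F))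
    (hW : finrank F W = t - 1) (hWR : W ≤ R) (hR : finrank F R = t + 1) (n : ℕ) :
    Nat.card {f : Fin n → Submodule F (Fin k → F) //
        (∀ i, finrank F (f i) = t ∧ W ≤ f i) ∧
        finrank F ↥(R ⊔ ⨆ i, f i) = t + 1 + n} *
      (Fintype.card F ^ t - Fintype.card F ^ (t - 1)) ^ n =
    ∏ i ∈ Finset.range n, (Fintype.card F ^ k - Fintype.card F ^ (t + 1 + i)) := by
  classical
  haveI : Finite (Submodule F (Fin k → F)) :=
    Finite.of_injective (fun A => (A : Set (Fin k → F))) SetLike.coe_injective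
  have hWt : finrank F W + 1 = t := by omega
  induction n with
  | zero =>
    haveI : Unique {f : Fin 0 → Submodule F (Fin k → F) //
        (∀ i, finrank F (f i) = t ∧ W ≤ f i) ∧
        finrank F ↥(R ⊔ ⨆ i, f i) = t + 1 + 0} := by
      refine ⟨⟨⟨Fin.elim0, fun i => i.elim0, ?_⟩⟩, fun a => Subtype.ext (funext fun i => i.elim0)⟩
      rw [show (⨆ i : Fin 0, Fin.elim0 i) = (⊥ : Submodule F (Fin k → F)) from iSup_of_empty _,
        sup_bot_eq, hR]
    rw [Nat.card_unique]
    simp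
  | succ n ih =>
    -- the sigma decomposition
    set Tn := {f : Fin n → Submodule F (Fin k → F) //
        (∀ i, finrank F (f i) = t ∧ W ≤ f i) ∧
        finrank F ↥(R ⊔ ⨆ i, f i) = t + 1 + n} with hTn
    have main : Nat.card {f : Fin (n+1) → Submodule F (Fin k → F) //
          (∀ i, finrank F (f i) = t ∧ W ≤ f i) ∧
          finrank F ↥(R ⊔ ⨆ i, f i) = t + 1 + (n+1)} *
        (Fintype.card F ^ t - Fintype.card F ^ (t - 1)) =
        Nat.card Tn * (Fintype.card F ^ k - Fintype.card F ^ (t + 1 + n)) := by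
      have hQ : ∀ g : Tn, W ≤ R ⊔ ⨆ i, g.1 i := fun g => hWR.trans le_sup_left
      -- Equiv with sigma type
      let Φ : (Σ g : Tn, {V : Submodule F (Fin k → F) //
            finrank F V = t ∧ W ≤ V ∧ ¬ V ≤ R ⊔ ⨆ i, g.1 i}) →
          {f : Fin (n+1) → Submodule F (Fin k → F) //
            (∀ i, finrank F (f i) = t ∧ W ≤ f i) ∧
            finrank F ↥(R ⊔ ⨆ i, f i) = t + 1 + (n+1)} := fun p =>
        ⟨Fin.snoc p.1.1 p.2.1, by
          obtain ⟨⟨g, hg1, hg2⟩, ⟨V, hV1, hV2, hV3⟩⟩ := p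
          constructor
          · intro i
            induction i using Fin.lastCases with
            | last =>
              rw [show (Fin.snoc (α := fun _ => Submodule F (Fin k → F)) g V) (Fin.last n) = V
                from Fin.snoc_last _ _]
              exact ⟨hV1, hV2⟩
            | cast i =>
              rw [show (Fin.snoc (α := fun _ => Submodule F (Fin k → F)) g V) i.castSucc = g i
                from Fin.snoc_castSucc _ _ _]
              exact hg1 i
          · have hsup : (⨆ i, Fin.snoc (α := fun _ => Submodule F (Fin k → F)) g V i)
                = (⨆ i : Fin n, g i) ⊔ V := by
              rw [iSup_fin_succ']
              simp
            rw [hsup, ← sup_assoc]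
            have := (dichotomy W (R ⊔ ⨆ i : Fin n, g i) V (hWR.trans le_sup_left) hV2
              (by omega) hV3).1
            omega⟩
      have hbij : Function.Bijective Φ := by
        constructor
        · rintro ⟨⟨g, hg⟩, ⟨V, hV⟩⟩ ⟨⟨g', hg'⟩, ⟨V', hV'⟩⟩ h
          have h1 : Fin.snoc (α := fun _ => Submodule F (Fin k → F)) g V =
              Fin.snoc g' V' := congrArg Subtype.val h
          have hgg : g = g' := funext fun i => by
            have := congrFun h1 i.castSucc
            simpa using this
          subst hgg
          have hVV : V = V' := by
            have := congrFun h1 (Fin.last n)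
            simpa using this
          subst hVV
          rfl
        · rintro ⟨f, hf1, hf2⟩
          set g : Fin n → Submodule F (Fin k → F) := fun i => f i.castSucc with hgdef
          set V := f (Fin.last n) with hVdef
          have hsup : (⨆ i, f i) = (⨆ i : Fin n, g i) ⊔ V := iSup_fin_succ' f
          have hbound : finrank F ↥(R ⊔ ⨆ i : Fin n, g i) ≤ t + 1 + n := by
            have := tuple_sup_le W R hWR n g (fun i => ⟨(hf1 i.castSucc).2, by
              rw [(hf1 i.castSucc).1]; omega⟩)
            omega
          have hle : finrank F ↥((R ⊔ ⨆ i : Fin n, g i) ⊔ V) ≤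
              finrank F ↥(R ⊔ ⨆ i : Fin n, g i) + 1 :=
            sup_line_le W _ V (hWR.trans le_sup_left) (hf1 (Fin.last n)).2
              (by rw [(hf1 (Fin.last n)).1]; omega)
          rw [hsup, ← sup_assoc] at hf2
          have hrk : finrank F ↥(R ⊔ ⨆ i : Fin n, g i) = t + 1 + n := by omega
          have hVnle : ¬ V ≤ R ⊔ ⨆ i : Fin n, g i := by
            intro hVle
            rw [sup_eq_left.mpr hVle] at hf2
            omega
          refine ⟨⟨⟨g, fun i => hf1 i.castSucc, hrk⟩, ⟨V, (hf1 (Fin.last n)).1,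
            (hf1 (Fin.last n)).2, hVnle⟩⟩, ?_⟩
          exact Subtype.ext (Fin.snoc_init_self f)
      rw [← Nat.card_eq_of_bijective Φ hbij]
      -- card of sigma = sum of fibers
      haveI := Fintype.ofFinite Tn
      haveI : ∀ g : Tn, Fintype {V : Submodule F (Fin k → F) //
          finrank F V = t ∧ W ≤ V ∧ ¬ V ≤ R ⊔ ⨆ i, g.1 i} := fun g => Fintype.ofFinite _
      rw [Nat.card_eq_fintype_card, Fintype.card_sigma]
      rw [Finset.sum_mul]
      rw [Finset.sum_congr rfl (fun g _ => by
        rw [← Nat.card_eq_fintype_card,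
          count_ext t ht W (R ⊔ ⨆ i, g.1 i) hW (hQ g), g.2.2])]
      rw [Finset.sum_const, smul_eq_mul, Finset.card_univ, ← Nat.card_eq_fintype_card]
    rw [Finset.prod_range_succ, ← ih, pow_succ]
    calc Nat.card {f : Fin (n+1) → Submodule F (Fin k → F) //
          (∀ i, finrank F (f i) = t ∧ W ≤ f i) ∧
          finrank F ↥(R ⊔ ⨆ i, f i) = t + 1 + (n+1)} *
        ((Fintype.card F ^ t - Fintype.card F ^ (t - 1)) ^ n *
          (Fintype.card F ^ t - Fintype.card F ^ (t - 1)))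
        = Nat.card {f : Fin (n+1) → Submodule F (Fin k → F) //
            (∀ i, finrank F (f i) = t ∧ W ≤ f i) ∧
            finrank F ↥(R ⊔ ⨆ i, f i) = t + 1 + (n+1)} *
          (Fintype.card F ^ t - Fintype.card F ^ (t - 1)) *
          (Fintype.card F ^ t - Fintype.card F ^ (t - 1)) ^ n := by ring
      _ = Nat.card Tn * (Fintype.card F ^ k - Fintype.card F ^ (t + 1 + n)) *
          (Fintype.card F ^ t - Fintype.card F ^ (t - 1)) ^ n := by rw [main]
      _ = Nat.card Tn * (Fintype.card F ^ t - Fintype.card F ^ (t - 1)) ^ n *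
          (Fintype.card F ^ k - Fintype.card F ^ (t + 1 + n)) := by ring

lemma orderings_count [DecidableEq (Submodule F (Fin k → F))] (n : ℕ) (s : Finset (Submodule F (Fin k → F))) (hcard : s.card = n) :
    Nat.card {f : Fin n → Submodule F (Fin k → F) // Finset.image f Finset.univ = s} =
      n.factorial := by
  classical
  haveI : Finite (Submodule F (Fin k → F)) :=
    Finite.of_injective (fun A => (A : Set (Fin k → F))) SetLike.coe_injective
  have hcards : Fintype.card ↥s = Fintype.card (Fin n) := by
    rw [Fintype.card_coe, hcard, Fintype.card_fin]
  let φ : (Fin n ≃ ↥s) → {f : Fin n → Submodule F (Fin k → F) //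
      Finset.image f Finset.univ = s} := fun e =>
    ⟨fun i => ↑(e i), by
      ext x
      simp only [Finset.mem_image, Finset.mem_univ, true_and]
      constructor
      · rintro ⟨i, rfl⟩; exact (e i).2
      · intro hx; exact ⟨e.symm ⟨x, hx⟩, by simp⟩⟩
  have hbij : Function.Bijective φ := by
    constructor
    · intro e e' h
      have h1 := congrArg Subtype.val h
      exact Equiv.ext fun i => Subtype.ext (congrFun h1 i)
    · rintro ⟨f, hf⟩
      have hinj : Set.InjOn f ↑(Finset.univ : Finset (Fin n)) := by
        rw [← Finset.card_image_iff]
        rw [hf, hcard, Finset.card_univ, Fintype.card_fin]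
      have hmem : ∀ i, f i ∈ s := fun i => by
        rw [← hf]; exact Finset.mem_image_of_mem f (Finset.mem_univ i)
      let g : Fin n → ↥s := fun i => ⟨f i, hmem i⟩
      have hgbij : Function.Bijective g := by
        rw [Fintype.bijective_iff_injective_and_card]
        refine ⟨fun a b hab => ?_, hcards.symm⟩
        exact hinj (Finset.mem_coe.mpr (Finset.mem_univ a))
          (Finset.mem_coe.mpr (Finset.mem_univ b)) (congrArg Subtype.val hab)
      exact ⟨Equiv.ofBijective g hgbij, Subtype.ext rfl⟩
  rw [← Nat.card_eq_of_bijective φ hbij, Nat.card_eq_fintype_card,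
    Fintype.card_equiv (Fintype.equivOfCardEq hcards).symm, Fintype.card_fin]

lemma unordered_count (t : ℕ) (ht : 1 ≤ t) (W R : Submodule F (Fin k → F))
    (hW : finrank F W = t - 1) (hWR : W ≤ R) (hR : finrank F R = t + 1) (n : ℕ) :
    Nat.card {s : Finset (Submodule F (Fin k → F)) //
        s.card = n ∧ (∀ V ∈ s, finrank F V = t ∧ W ≤ V) ∧
        finrank F ↥(R ⊔ s.sup id) = t + 1 + n} * n.factorial =
    Nat.card {f : Fin n → Submodule F (Fin k → F) //
        (∀ i, finrank F (f i) = t ∧ W ≤ f i) ∧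
        finrank F ↥(R ⊔ ⨆ i, f i) = t + 1 + n} := by
  classical
  haveI : Finite (Submodule F (Fin k → F)) :=
    Finite.of_injective (fun A => (A : Set (Fin k → F))) SetLike.coe_injective
  have hsupim : ∀ f : Fin n → Submodule F (Fin k → F),
      (Finset.image f Finset.univ).sup id = ⨆ i, f i := by
    intro f
    rw [Finset.sup_image, Function.id_comp, Finset.sup_univ_eq_iSup]
  let Ψ : {f : Fin n → Submodule F (Fin k → F) //
        (∀ i, finrank F (f i) = t ∧ W ≤ f i) ∧
        finrank F ↥(R ⊔ ⨆ i, f i) = t + 1 + n} →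
      {s : Finset (Submodule F (Fin k → F)) //
        s.card = n ∧ (∀ V ∈ s, finrank F V = t ∧ W ≤ V) ∧
        finrank F ↥(R ⊔ s.sup id) = t + 1 + n} := fun f =>
    ⟨Finset.image f.1 Finset.univ, by
      obtain ⟨f, hf1, hf2⟩ := f
      have hsup : finrank F ↥(R ⊔ (Finset.image f Finset.univ).sup id) = t + 1 + n := by
        rw [hsupim f]; exact hf2
      have hc : (Finset.image f Finset.univ).card = n := by
        have hle : (Finset.image f Finset.univ).card ≤ n := by
          simpa using Finset.card_image_le (s := Finset.univ) (f := f)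
        have hge := finset_sup_le W R hWR (Finset.image f Finset.univ) (fun V hV => by
          obtain ⟨i, _, rfl⟩ := Finset.mem_image.mp hV
          exact ⟨(hf1 i).2, by rw [(hf1 i).1]; omega⟩)
        rw [hsup, hR] at hge
        omega
      exact ⟨hc, fun V hV => by
        obtain ⟨i, _, rfl⟩ := Finset.mem_image.mp hV; exact hf1 i, hsup⟩⟩
  haveI := Fintype.ofFinite {f : Fin n → Submodule F (Fin k → F) //
        (∀ i, finrank F (f i) = t ∧ W ≤ f i) ∧
        finrank F ↥(R ⊔ ⨆ i, f i) = t + 1 + n}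
  haveI := Fintype.ofFinite {s : Finset (Submodule F (Fin k → F)) //
        s.card = n ∧ (∀ V ∈ s, finrank F V = t ∧ W ≤ V) ∧
        finrank F ↥(R ⊔ s.sup id) = t + 1 + n}
  have hfib : ∀ sp : {s : Finset (Submodule F (Fin k → F)) //
        s.card = n ∧ (∀ V ∈ s, finrank F V = t ∧ W ≤ V) ∧
        finrank F ↥(R ⊔ s.sup id) = t + 1 + n},
      Nat.card {f // Ψ f = sp} = n.factorial := by
    rintro ⟨s, hs1, hs2, hs3⟩
    rw [← orderings_count n s hs1]
    apply Nat.card_eq_of_bijective (fun fp => ⟨fp.1.1, by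
      have := congrArg Subtype.val fp.2
      exact this⟩)
    constructor
    · rintro ⟨⟨f, hf⟩, hΨ⟩ ⟨⟨f', hf'⟩, hΨ'⟩ h
      have : f = f' := congrArg Subtype.val h
      subst this
      rfl
    · rintro ⟨f, hf⟩
      have hf1 : ∀ i, finrank F (f i) = t ∧ W ≤ f i := fun i =>
        hs2 (f i) (by rw [← hf]; exact Finset.mem_image_of_mem f (Finset.mem_univ i))
      have hf2 : finrank F ↥(R ⊔ ⨆ i, f i) = t + 1 + n := by
        rw [← hsupim f, hf]; exact hs3
      exact ⟨⟨⟨f, hf1, hf2⟩, Subtype.ext hf⟩, rfl⟩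
  have hsig : Nat.card (Σ sp : {s : Finset (Submodule F (Fin k → F)) //
        s.card = n ∧ (∀ V ∈ s, finrank F V = t ∧ W ≤ V) ∧
        finrank F ↥(R ⊔ s.sup id) = t + 1 + n}, {f // Ψ f = sp}) =
      Nat.card {s : Finset (Submodule F (Fin k → F)) //
        s.card = n ∧ (∀ V ∈ s, finrank F V = t ∧ W ≤ V) ∧
        finrank F ↥(R ⊔ s.sup id) = t + 1 + n} * n.factorial := by
    haveI : ∀ sp : {s : Finset (Submodule F (Fin k → F)) //
        s.card = n ∧ (∀ V ∈ s, finrank F V = t ∧ W ≤ V) ∧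
        finrank F ↥(R ⊔ s.sup id) = t + 1 + n}, Fintype {f // Ψ f = sp} :=
      fun sp => Fintype.ofFinite _
    rw [Nat.card_eq_fintype_card, Fintype.card_sigma,
      Finset.sum_congr rfl (fun sp _ => by rw [← Nat.card_eq_fintype_card, hfib sp]),
      Finset.sum_const, smul_eq_mul, Finset.card_univ, Nat.card_eq_fintype_card]
  rw [← hsig]
  exact Nat.card_eq_of_bijective _ (Equiv.sigmaFiberEquiv Ψ).bijective

lemma arith_final (Q m t k A : ℕ) (hQ : 2 ≤ Q) (ht : 1 ≤ t) (hk : m + t + 2 ≤ k)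
    (h : A * (m + 1).factorial * (Q ^ t - Q ^ (t - 1)) ^ (m + 1) =
      ∏ i ∈ Finset.range (m + 1), (Q ^ k - Q ^ (t + 1 + i))) :
    A = (Q ^ ((m + 1) * (m + 4) / 2) *
        ∏ i ∈ Finset.range (m + 1), gbinom Q (k - t - (i + 1)) 1) /
      (m + 1).factorial := by
  set n := m + 1 with hn
  set S := ∑ i ∈ Finset.range n, i with hS
  set E := (m + 1) * (m + 4) / 2 with hE
  have hgb : ∀ d : ℕ, gbinom Q d 1 * (Q - 1) = Q ^ d - 1 := by
    intro d
    have hdvd : (Q - 1) ∣ Q ^ d - 1 := by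
      simpa using Nat.sub_dvd_pow_sub_pow Q 1 d
    unfold gbinom
    rw [Finset.prod_range_one, Finset.prod_range_one]
    simp only [Nat.sub_zero, pow_one]
    exact Nat.div_mul_cancel hdvd
  have hX : Q ^ t - Q ^ (t - 1) = Q ^ (t - 1) * (Q - 1) := by
    have h1 : Q ^ t = Q ^ (t - 1) * Q := by
      rw [← pow_succ]; congr 1; omega
    rw [h1, Nat.mul_sub, mul_one]
  have hrhs : ∏ i ∈ Finset.range n, (Q ^ k - Q ^ (t + 1 + i)) =
      Q ^ (n * (t + 1) + S) *
        ((∏ i ∈ Finset.range n, gbinom Q (k - t - (i + 1)) 1) * (Q - 1) ^ n) := by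
    have step : ∀ i ∈ Finset.range n, Q ^ k - Q ^ (t + 1 + i) =
        Q ^ (t + 1 + i) * (gbinom Q (k - t - (i + 1)) 1 * (Q - 1)) := by
      intro i hi
      have hik : i < n := Finset.mem_range.mp hi
      rw [hgb, Nat.mul_sub, mul_one, ← pow_add]
      congr 2
      omega
    rw [Finset.prod_congr rfl step, Finset.prod_mul_distrib,
      Finset.prod_pow_eq_pow_sum, Finset.prod_mul_distrib]
    congr 2
    · rw [Finset.sum_add_distrib, Finset.sum_const, Finset.card_range, smul_eq_mul]
    · rw [Finset.prod_const, Finset.card_range]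
  have hexp : n * (t + 1) + S = E + (t - 1) * n := by
    have h1 : S * 2 = n * (n - 1) := Finset.sum_range_id_mul_two n
    have h2 : n * (t + 1) = (t - 1) * n + 2 * n := by
      have : t + 1 = (t - 1) + 2 := by omega
      rw [this]
      ring
    have h3 : n * (n - 1) + 4 * n = (m + 1) * (m + 4) := by
      have : n - 1 = m := by omega
      rw [this]
      have : n = m + 1 := hn
      rw [this]
      ring
    omega
  have hC : (0:ℕ) < Q ^ ((t - 1) * n) * (Q - 1) ^ n := by
    apply Nat.mul_pos (pow_pos (by omega : 0 < Q) _) (pow_pos (by omega : 0 < Q - 1) _)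
  have hkey : (A * (m + 1).factorial) * (Q ^ ((t - 1) * n) * (Q - 1) ^ n) =
      (Q ^ E * ∏ i ∈ Finset.range n, gbinom Q (k - t - (i + 1)) 1) *
        (Q ^ ((t - 1) * n) * (Q - 1) ^ n) := by
    calc (A * (m + 1).factorial) * (Q ^ ((t - 1) * n) * (Q - 1) ^ n)
        = A * (m + 1).factorial * (Q ^ (t - 1) * (Q - 1)) ^ n := by
          rw [mul_pow, ← pow_mul]
      _ = ∏ i ∈ Finset.range n, (Q ^ k - Q ^ (t + 1 + i)) := by rw [← hX]; exact h
      _ = Q ^ (n * (t + 1) + S) *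
          ((∏ i ∈ Finset.range n, gbinom Q (k - t - (i + 1)) 1) * (Q - 1) ^ n) := hrhs
      _ = (Q ^ E * ∏ i ∈ Finset.range n, gbinom Q (k - t - (i + 1)) 1) *
          (Q ^ ((t - 1) * n) * (Q - 1) ^ n) := by
          rw [hexp, pow_add]; ring
  have hfin : A * (m + 1).factorial =
      Q ^ E * ∏ i ∈ Finset.range n, gbinom Q (k - t - (i + 1)) 1 :=
    Nat.eq_of_mul_eq_mul_right hC hkey
  rw [← hfin, Nat.mul_div_cancel _ (Nat.factorial_pos _)]


/-- Let `W` be a `(t-1)`-dimensional subspace of `𝔽_q^k` and `R` a fixed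
`(t+1)`-dimensional subspace containing `W`, with `m + t + 2 ≤ k`. The number of
unordered `(m+1)`-element sets `{V₁, …, V_{m+1}}` of `t`-dimensional subspaces
containing `W` such that `R + ∑ Vᵢ` has dimension `m + t + 2` equals
`(1/(m+1)!) q^((m+1)(m+4)/2) ∏_{i=1}^{m+1} [k-t-i choose 1]_q`. -/
theorem stmt_7 (q k m t : ℕ) (hq : IsPrimePow q) (hm : 1 ≤ m) (ht : 1 ≤ t)
    (hk : m + t + 2 ≤ k)
    (F : Type) [Field F] [Fintype F] (hF : Fintype.card F = q)
    (W : Submodule F (Fin k → F)) (hW : Module.finrank F W = t - 1)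
    (R : Submodule F (Fin k → F)) (hWR : W ≤ R) (hR : Module.finrank F R = t + 1) :
    Nat.card {s : Finset (Submodule F (Fin k → F)) //
        s.card = m + 1 ∧ (∀ V ∈ s, Module.finrank F V = t ∧ W ≤ V) ∧
        Module.finrank F ↥(R ⊔ s.sup id) = m + t + 2} =
      (q ^ ((m + 1) * (m + 4) / 2) *
        ∏ i ∈ Finset.range (m + 1), gbinom q (k - t - (i + 1)) 1) /
        Nat.factorial (m + 1) := by
  classical
  subst hF
  have hq2 : 2 ≤ Fintype.card F := hq.two_le
  have hcongr : Nat.card {s : Finset (Submodule F (Fin k → F)) //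
      s.card = m + 1 ∧ (∀ V ∈ s, finrank F V = t ∧ W ≤ V) ∧
      finrank F ↥(R ⊔ s.sup id) = m + t + 2} =
    Nat.card {s : Finset (Submodule F (Fin k → F)) //
      s.card = (m + 1) ∧ (∀ V ∈ s, finrank F V = t ∧ W ≤ V) ∧
      finrank F ↥(R ⊔ s.sup id) = t + 1 + (m + 1)} :=
    Nat.card_congr (Equiv.subtypeEquivRight (fun s => by
      constructor
      · rintro ⟨a, b, c⟩; exact ⟨a, b, by omega⟩
      · rintro ⟨a, b, c⟩; exact ⟨a, b, by omega⟩))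
  rw [hcongr]
  apply arith_final _ m t k _ hq2 ht hk
  rw [unordered_count t ht W R hW hWR hR (m + 1)]
  exact ordered_count t ht W R hW hWR hR (m + 1)
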